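/- Let (G,I,O) be an open graph with |I| = |O| that admits a flow (f,≺). Then: (a) f is injective; (b) for each input i ∈ I, the iterates i, f(i), f²(i), … are pairwise distinct, each consecutive pair is adjacent in G, and the sequence reaches an output vertex after finitely many steps; (c) the flow wires of distinct inputs are vertex-disjoint; (d) every vertex of V lies on exactly one flow wire, so the flow wires partition V into |I| paths from inputs to outputs; (e) each flow wire is an induced path of G: two vertices lying on the same flow wire are adjacent in G if and only if they are consecutive on the wire. -/

import Mathlib

open Finset

variable {V : Type*} [Fintype V] [DecidableEq V]

/-- A flow on an open graph `(G,I,O)`: a map `f : O^c → I^c` together with a strict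
partial order `r` on `V` such that for every non-output vertex `i`:
(f1) `f(i)` is adjacent to `i`; (f2) `i ≺ f(i)`; (f3) every `k ≠ i` adjacent to `f(i)`
satisfies `i ≺ k`. -/
def IsFlow (G : SimpleGraph V) [DecidableRel G.Adj] (I O : Finset V)
    (f : V → V) (r : V → V → Prop) : Prop :=
  IsIrrefl V r ∧ IsTrans V r ∧
    ∀ i ∉ O, f i ∉ I ∧ G.Adj i (f i) ∧ r i (f i) ∧
      ∀ k, k ≠ i → G.Adj k (f i) → r i k

/-- `t` is an index on the flow wire of `i`: no strictly earlier iterate of `f` on `i`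
has yet reached an output (so the wire, which stops at the first output reached, is
`{f^[t] i : WireIdx f O i t}`). -/
def WireIdx (f : V → V) (O : Finset V) (i : V) (t : ℕ) : Prop :=
  ∀ s < t, f^[s] i ∉ O

/-- `v` lies on the flow wire of `i` (the sequence `i, f(i), f²(i), …` stopped at the
first output vertex reached). -/
def OnWire (f : V → V) (O : Finset V) (i : V) (v : V) : Prop :=
  ∃ t, WireIdx f O i t ∧ f^[t] i = v


/-- Let `(G,I,O)` be an open graph with `|I| = |O|` admitting a flow
`(f,≺)`.  Then: (a) `f` is injective (on the measured vertices `O^c`); (b) for each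
input `i ∈ I`, the iterates `i, f(i), f²(i), …` of the flow wire are pairwise
distinct, each consecutive pair is adjacent in `G`, and the sequence reaches an output
vertex after finitely many steps; (c) the flow wires of distinct inputs are
vertex-disjoint; (d) every vertex of `V` lies on exactly one flow wire, so the flow
wires partition `V` into `|I|` paths from inputs to outputs; (e) each flow wire is an
induced path of `G`: two vertices on the same flow wire are adjacent in `G` iff they
are consecutive on the wire. -/
theorem flow_wires_structure (G : SimpleGraph V) [DecidableRel G.Adj]
    (I O : Finset V) (f : V → V) (r : V → V → Prop)
    (hflow : IsFlow G I O f r) (hIO : I.card = O.card) :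
    -- (a) `f` is injective
    (∀ i ∉ O, ∀ j ∉ O, f i = f j → i = j)
    -- (b) each wire consists of pairwise distinct vertices, consecutive vertices are
    -- adjacent, and the wire reaches an output after finitely many steps
    ∧ (∀ i ∈ I,
        (∃ t, f^[t] i ∈ O)
        ∧ (∀ s t, WireIdx f O i s → WireIdx f O i t → s ≠ t → f^[s] i ≠ f^[t] i)
        ∧ (∀ t, WireIdx f O i (t + 1) → G.Adj (f^[t] i) (f^[t + 1] i)))
    -- (c) wires of distinct inputs are vertex-disjoint
    ∧ (∀ i ∈ I, ∀ j ∈ I, i ≠ j → ∀ v, OnWire f O i v → ¬ OnWire f O j v)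
    -- (d) every vertex lies on exactly one flow wire
    ∧ (∀ v : V, ∃! i, i ∈ I ∧ OnWire f O i v)
    -- (e) each wire is an induced path
    ∧ (∀ i ∈ I, ∀ s t, WireIdx f O i s → WireIdx f O i t →
        (G.Adj (f^[s] i) (f^[t] i) ↔ (t = s + 1 ∨ s = t + 1))) := by
  obtain ⟨hirr, htr, hmain⟩ := hflow
  -- (a) injectivity
  have hinj : ∀ i ∉ O, ∀ j ∉ O, f i = f j → i = j := by
    intro i hi j hj hfe
    by_contra hne
    have ha1 : G.Adj j (f i) := by rw [hfe]; exact (hmain j hj).2.1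
    have ha2 : G.Adj i (f j) := by rw [← hfe]; exact (hmain i hi).2.1
    have h1 := (hmain i hi).2.2.2 j (Ne.symm hne) ha1
    have h2 := (hmain j hj).2.2.2 i hne ha2
    exact hirr.irrefl i (htr.trans _ _ _ h1 h2)
  -- the order increases along the wire
  have hchain : ∀ (i : V) (s t : ℕ), s < t → (∀ u, u < t → f^[u] i ∉ O) →
      r (f^[s] i) (f^[t] i) := by
    intro i s t hst hO
    induction t with
    | zero => omega
    | succ t ih =>
      have hstep : r (f^[t] i) (f^[t+1] i) := by
        rw [Function.iterate_succ_apply']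
        exact (hmain _ (hO t (by omega))).2.2.1
      rcases Nat.lt_succ_iff_lt_or_eq.mp hst with h | h
      · exact htr.trans _ _ _ (ih h (fun u hu => hO u (by omega))) hstep
      · rw [h]; exact hstep
  have hnev : ∀ (i : V) (s t : ℕ), s < t → (∀ u, u < t → f^[u] i ∉ O) →
      f^[s] i ≠ f^[t] i := by
    intro i s t hst hO heq
    have := hchain i s t hst hO
    rw [heq] at this
    exact hirr.irrefl _ this
  -- (b) wires reach an output
  have hreach : ∀ i : V, ∃ t, f^[t] i ∈ O := by
    intro i
    by_contra h
    push_neg at h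
    obtain ⟨s, t, hst, heq⟩ := Finite.exists_ne_map_eq_of_infinite (fun t : ℕ => f^[t] i)
    rcases hst.lt_or_gt with h' | h'
    · exact hnev i s t h' (fun u _ => h u) heq
    · exact hnev i t s h' (fun u _ => h u) heq.symm
  -- uniqueness of the wire through a vertex
  have huniq : ∀ (s t : ℕ) (i j : V), i ∈ I → j ∈ I →
      WireIdx f O i s → WireIdx f O j t → f^[s] i = f^[t] j → i = j ∧ s = t := by
    intro s
    induction s with
    | zero =>
      intro t i j hi hj _ hwt heq
      cases t with
      | zero => exact ⟨heq, rfl⟩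
      | succ t =>
        exfalso
        rw [Function.iterate_succ_apply'] at heq
        have hni : f (f^[t] j) ∉ I := (hmain _ (hwt t (Nat.lt_succ_self t))).1
        rw [← heq] at hni
        exact hni hi
    | succ s ih =>
      intro t i j hi hj hws hwt heq
      cases t with
      | zero =>
        exfalso
        rw [Function.iterate_succ_apply'] at heq
        have hni : f (f^[s] i) ∉ I := (hmain _ (hws s (Nat.lt_succ_self s))).1
        rw [heq] at hni
        exact hni hj
      | succ t =>
        rw [Function.iterate_succ_apply', Function.iterate_succ_apply'] at heq
        have h1 : f^[s] i ∉ O := hws s (Nat.lt_succ_self s)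
        have h2 : f^[t] j ∉ O := hwt t (Nat.lt_succ_self t)
        have heq' := hinj _ h1 _ h2 heq
        obtain ⟨hij, hst⟩ := ih t i j hi hj (fun u hu => hws u (by omega))
          (fun u hu => hwt u (by omega)) heq'
        exact ⟨hij, by omega⟩
  -- surjectivity of f : Oᶜ → Iᶜ
  have hsurj : ∀ v ∉ I, ∃ u, u ∉ O ∧ f u = v := by
    intro v hv
    have hmaps : (Oᶜ : Finset V).image f ⊆ (Iᶜ : Finset V) := by
      intro x hx
      simp only [Finset.mem_image, Finset.mem_compl] at hx ⊢
      obtain ⟨u, hu, rfl⟩ := hx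
      exact (hmain u hu).1
    have hcard : ((Oᶜ : Finset V).image f).card = (Iᶜ : Finset V).card := by
      rw [Finset.card_image_of_injOn
        (fun a ha b hb => hinj a (Finset.mem_compl.mp ha) b (Finset.mem_compl.mp hb))]
      simp [Finset.card_compl, hIO]
    have heqs := Finset.eq_of_subset_of_card_le hmaps (le_of_eq hcard.symm)
    have hvmem : v ∈ (Oᶜ : Finset V).image f := by
      rw [heqs]; exact Finset.mem_compl.mpr hv
    obtain ⟨u, hu, hf⟩ := Finset.mem_image.mp hvmem
    exact ⟨u, Finset.mem_compl.mp hu, hf⟩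
  -- (d) existence: every vertex lies on some wire
  have hwf : WellFounded r := @Finite.wellFounded_of_trans_of_irrefl V _ r htr hirr
  have hexists : ∀ v : V, ∃ i ∈ I, OnWire f O i v := by
    intro v
    induction v using hwf.induction with
    | _ v ih =>
      by_cases hv : v ∈ I
      · exact ⟨v, hv, 0, fun s hs => absurd hs (Nat.not_lt_zero s), rfl⟩
      · obtain ⟨u, hu, hfu⟩ := hsurj v hv
        have hr : r u v := by rw [← hfu]; exact (hmain u hu).2.2.1
        obtain ⟨i, hi, t, hwt, hft⟩ := ih u hr
        refine ⟨i, hi, t + 1, ?_, ?_⟩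
        · intro s hs
          rcases Nat.lt_succ_iff_lt_or_eq.mp hs with h | h
          · exact hwt s h
          · rw [h, hft]; exact hu
        · rw [Function.iterate_succ_apply', hft, hfu]
  -- (e) key: non-consecutive vertices on a wire are non-adjacent
  have hkey : ∀ (i : V) (s t : ℕ), WireIdx f O i t → s < t → t ≠ s + 1 →
      ¬ G.Adj (f^[s] i) (f^[t] i) := by
    intro i s t hwt hst hts hadj
    obtain ⟨t', rfl⟩ : ∃ t', t = t' + 1 := ⟨t - 1, by omega⟩
    have hO' : f^[t'] i ∉ O := hwt t' (Nat.lt_succ_self t')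
    have hadj' : G.Adj (f^[s] i) (f (f^[t'] i)) := by
      rw [Function.iterate_succ_apply'] at hadj; exact hadj
    have hne' : f^[s] i ≠ f^[t'] i :=
      hnev i s t' (by omega) (fun u hu => hwt u (by omega))
    have hr1 : r (f^[t'] i) (f^[s] i) := (hmain _ hO').2.2.2 _ hne' hadj'
    have hr2 : r (f^[s] i) (f^[t'] i) :=
      hchain i s t' (by omega) (fun u hu => hwt u (by omega))
    exact hirr.irrefl _ (htr.trans _ _ _ hr1 hr2)
  have hadjstep : ∀ (i : V) (t : ℕ), f^[t] i ∉ O → G.Adj (f^[t] i) (f^[t + 1] i) := by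
    intro i t hO'
    rw [Function.iterate_succ_apply']
    exact (hmain _ hO').2.1
  refine ⟨hinj, ?_, ?_, ?_, ?_⟩
  · -- (b)
    intro i _
    refine ⟨hreach i, ?_, ?_⟩
    · intro s t hws hwt hst
      rcases hst.lt_or_gt with h | h
      · exact hnev i s t h hwt
      · exact (hnev i t s h hws).symm
    · intro t hwt
      exact hadjstep i t (hwt t (Nat.lt_succ_self t))
  · -- (c)
    rintro i hi j hj hij v ⟨s, hws, hfs⟩ ⟨t, hwt, hft⟩
    exact hij (huniq s t i j hi hj hws hwt (by rw [hfs, hft])).1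
  · -- (d)
    intro v
    obtain ⟨i, hi, hw⟩ := hexists v
    refine ⟨i, ⟨hi, hw⟩, ?_⟩
    rintro j ⟨hj, tj, hwj, hfj⟩
    obtain ⟨ti, hwi, hfi⟩ := hw
    exact (huniq tj ti j i hj hi hwj hwi (by rw [hfj, hfi])).1
  · -- (e)
    intro i _ s t hws hwt
    constructor
    · intro hadj
      by_contra hc
      push_neg at hc
      rcases lt_trichotomy s t with h | h | h
      · exact hkey i s t hwt h hc.1 hadj
      · rw [h] at hadj; exact G.loopless.irrefl _ hadj
      · exact hkey i t s hws h hc.2 hadj.symm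
    · rintro (rfl | rfl)
      · exact hadjstep i s (hwt s (Nat.lt_succ_self s))
      · exact (hadjstep i t (hws t (Nat.lt_succ_self t))).symm
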